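/- Let ν>0 and let n, j be integers with 1 ≤ n < j. Then ((1+2/ν)^j − 1)·(ν/(2+ν))^n / n − ∑_{k=n+1}^{j} (2/ν)^k C(j,k) ∑_{i=n}^{k−1} (−1)^{i+n} C(i,n) ν^i/(i·2^i) = (1/n)·(1 − (ν/(2+ν))^n). -/

import Mathlib

open Finset


private lemma alt_choose_sum (r j : ℕ) (hrj : r < j) :
    ∑ t ∈ Finset.Ico r (j + 1), (-1 : ℝ) ^ t * (j.choose t : ℝ) * (t.choose r : ℝ) = 0 := by
  rw [Finset.sum_Ico_eq_sum_range]
  have hlen : j + 1 - r = (j - r) + 1 := by omega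
  rw [hlen]
  have key : ∀ s ∈ Finset.range ((j - r) + 1),
      (-1 : ℝ) ^ (r + s) * (j.choose (r + s) : ℝ) * ((r + s).choose r : ℝ)
      = ((-1:ℝ)^r * (j.choose r : ℝ)) * ((-1:ℝ)^s * ((j - r).choose s : ℝ)) := by
    intro s hs
    have hs' : r + s ≤ j := by simp only [Finset.mem_range] at hs; omega
    have h := Nat.choose_mul (n := j) (k := r + s) (s := r) (Nat.le_add_right r s)
    rw [Nat.add_sub_cancel_left] at h
    have h' : (j.choose (r+s) : ℝ) * ((r+s).choose r : ℝ)
        = (j.choose r : ℝ) * ((j-r).choose s : ℝ) := by exact_mod_cast congrArg (Nat.cast : ℕ → ℝ) h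
    rw [pow_add]
    linear_combination ((-1:ℝ)^r * (-1:ℝ)^s) * h'
  rw [Finset.sum_congr rfl key, ← Finset.mul_sum]
  have hz : ∑ s ∈ Finset.range ((j - r) + 1), (-1:ℝ)^s * ((j - r).choose s : ℝ) = 0 := by
    have := Int.alternating_sum_range_choose_of_ne (n := j - r) (by omega)
    exact_mod_cast congrArg (Int.cast : ℤ → ℝ) this
  rw [hz, mul_zero]

private lemma lemQ (x : ℝ) (hx : x ≠ 0) (n : ℕ) (hn : 1 ≤ n) :
    ∀ j, n ≤ j → ∑ m ∈ Finset.Ico n (j+1), x ^ m * (j.choose m : ℝ) *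
      (∑ i ∈ Finset.Ico n (m+1), (-1:ℝ)^(i+n) * (i.choose n : ℝ) * ((1/x)^i / i))
      = (1+x)^(j-n) / n := by
  intro j hj
  induction j, hj using Nat.le_induction with
  | base =>
    have h1 : n + 1 - n = 1 := by omega
    rw [Finset.sum_Ico_eq_sum_range, h1, Finset.sum_range_one, Nat.add_zero,
      Finset.sum_Ico_eq_sum_range, h1, Finset.sum_range_one, Nat.add_zero,
      Nat.choose_self, Nat.sub_self, pow_zero, Nat.cast_one,
      Even.neg_one_pow ⟨n, rfl⟩]
    have hxn : x ^ n * (1/x)^n = 1 := by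
      rw [← mul_pow, mul_one_div, div_self hx, one_pow]
    have hnn : (n:ℝ) ≠ 0 := by positivity
    field_simp
    exact hxn

  | succ j hj ih =>
    have hnR : (n:ℝ) ≠ 0 := by positivity
    set S : ℕ → ℝ := fun k => ∑ i ∈ Finset.Ico n k, (-1:ℝ)^(i+n) * (i.choose n : ℝ) * ((1/x)^i / i) with hS
    -- Pascal split
    have pascal : ∀ m ∈ Finset.Ico n (j+1+1),
        x ^ m * ((j+1).choose m : ℝ) * S (m+1)
        = x ^ m * (j.choose m : ℝ) * S (m+1) + x ^ m * (j.choose (m-1) : ℝ) * S (m+1) := by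
      intro m hm
      simp only [Finset.mem_Ico] at hm
      obtain ⟨m', rfl⟩ : ∃ m', m = m' + 1 := ⟨m - 1, by omega⟩
      rw [Nat.choose_succ_succ, Nat.add_sub_cancel]
      push_cast
      ring
    rw [Finset.sum_congr rfl pascal, Finset.sum_add_distrib]
    -- first sum = IH
    have h1 : ∑ m ∈ Finset.Ico n (j+1+1), x ^ m * (j.choose m : ℝ) * S (m+1)
        = (1+x)^(j-n) / n := by
      rw [Finset.sum_Ico_succ_top (by omega : n ≤ j+1), Nat.choose_succ_self,
        Nat.cast_zero, mul_zero, zero_mul, add_zero]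
      exact ih
    -- second sum: reindex
    have h2 : ∑ m ∈ Finset.Ico n (j+1+1), x ^ m * (j.choose (m-1) : ℝ) * S (m+1)
        = ∑ t ∈ Finset.Ico (n-1) (j+1), x ^ (t+1) * (j.choose t : ℝ) * S (t+2) := by
      have key := Finset.sum_Ico_add' (fun m => x ^ m * (j.choose (m-1) : ℝ) * S (m+1)) (n-1) (j+1) 1
      rw [(by omega : n - 1 + 1 = n)] at key
      rw [← key]
      apply Finset.sum_congr rfl
      intro t ht
      simp only [Nat.add_sub_cancel]
    rw [h1, h2]
    -- split S (t+2)
    have h3 : ∀ t ∈ Finset.Ico (n-1) (j+1),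
        x ^ (t+1) * (j.choose t : ℝ) * S (t+2)
        = x ^ (t+1) * (j.choose t : ℝ) * S (t+1)
          + ((-1:ℝ)^(n+1)/n) * ((-1:ℝ)^t * (j.choose t : ℝ) * (t.choose (n-1) : ℝ)) := by
      intro t ht
      simp only [Finset.mem_Ico] at ht
      have hnt : n ≤ t + 1 := by omega
      have hSt := Finset.sum_Ico_succ_top hnt
        (fun i => (-1:ℝ)^(i+n) * (i.choose n : ℝ) * ((1/x)^i / i))
      simp only [hS]
      rw [show t + 2 = t + 1 + 1 by omega, hSt]
      have e1 : x^(t+1) * (1/x)^(t+1) = 1 := by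
        rw [← mul_pow, mul_one_div, div_self hx, one_pow]
      have e2 : ((t:ℝ)+1) * (t.choose (n-1) : ℝ) = ((t+1).choose n : ℝ) * n := by
        have h0 := Nat.add_one_mul_choose_eq t (n-1)
        simp only [Nat.succ_eq_add_one, (by omega : n - 1 + 1 = n)] at h0
        exact_mod_cast congrArg (Nat.cast : ℕ → ℝ) h0
      have ht1 : ((t:ℝ)+1) ≠ 0 := by positivity
      have e3 : (-1:ℝ)^(t+1+n) = (-1:ℝ)^(n+1) * (-1:ℝ)^t := by
        rw [show t + 1 + n = (n + 1) + t by omega, pow_add]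
      have e4 : (((t+1).choose n : ℝ)) / ((t:ℝ)+1) = (t.choose (n-1) : ℝ) / n := by
        rw [div_eq_div_iff ht1 hnR]
        linear_combination -e2
      rw [e3]
      push_cast
      linear_combination ((-1:ℝ)^(n+1) * (-1:ℝ)^t * (j.choose t : ℝ) * (((t+1).choose n : ℝ)/((t:ℝ)+1))) * e1
        + ((-1:ℝ)^(n+1) * (-1:ℝ)^t * (j.choose t : ℝ)) * e4
    rw [Finset.sum_congr rfl h3, Finset.sum_add_distrib]
    -- alternating part is zero
    have h4 : ∑ t ∈ Finset.Ico (n-1) (j+1),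
        ((-1:ℝ)^(n+1)/n) * ((-1:ℝ)^t * (j.choose t : ℝ) * (t.choose (n-1) : ℝ)) = 0 := by
      rw [← Finset.mul_sum, alt_choose_sum (n-1) j (by omega), mul_zero]
    rw [h4, add_zero]
    -- remaining part
    have h5 : ∑ t ∈ Finset.Ico (n-1) (j+1), x ^ (t+1) * (j.choose t : ℝ) * S (t+1)
        = x * ((1+x)^(j-n)/n) := by
      rw [Finset.sum_eq_sum_Ico_succ_bot (by omega : n - 1 < j + 1)]
      have e1 : n - 1 + 1 = n := by omega
      have hSn : S n = 0 := by rw [hS]; simp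
      rw [e1, hSn, mul_zero, zero_add, ← ih, Finset.mul_sum]
      apply Finset.sum_congr rfl
      intro t ht
      ring
    rw [h5]
    have e6 : j + 1 - n = (j - n) + 1 := by omega
    rw [e6, pow_succ]
    ring

private lemma lemP (x : ℝ) (hx : x ≠ 0) (n : ℕ) (hn : 1 ≤ n) :
    ∀ j, n ≤ j → ∑ k ∈ Finset.Ico (n+1) (j+1), x ^ k * (j.choose k : ℝ) *
      (∑ i ∈ Finset.Ico n k, (-1:ℝ)^(i+n) * (i.choose n : ℝ) * ((1/x)^i / i))
      = ((1+x)^(j-n) - 1) / n := by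
  intro j hj
  induction j, hj using Nat.le_induction with
  | base => simp
  | succ j hj ih =>
    have hnR : (n:ℝ) ≠ 0 := by positivity
    set S : ℕ → ℝ := fun k => ∑ i ∈ Finset.Ico n k, (-1:ℝ)^(i+n) * (i.choose n : ℝ) * ((1/x)^i / i) with hS
    have pascal : ∀ k ∈ Finset.Ico (n+1) (j+1+1),
        x ^ k * ((j+1).choose k : ℝ) * S k
        = x ^ k * (j.choose k : ℝ) * S k + x ^ k * (j.choose (k-1) : ℝ) * S k := by
      intro k hk
      simp only [Finset.mem_Ico] at hk
      obtain ⟨k', rfl⟩ : ∃ k', k = k' + 1 := ⟨k - 1, by omega⟩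
      rw [Nat.choose_succ_succ, Nat.add_sub_cancel]
      push_cast
      ring
    rw [Finset.sum_congr rfl pascal, Finset.sum_add_distrib]
    have h1 : ∑ k ∈ Finset.Ico (n+1) (j+1+1), x ^ k * (j.choose k : ℝ) * S k
        = ((1+x)^(j-n) - 1) / n := by
      rw [Finset.sum_Ico_succ_top (by omega : n + 1 ≤ j+1), Nat.choose_succ_self,
        Nat.cast_zero, mul_zero, zero_mul, add_zero]
      exact ih
    have h2 : ∑ k ∈ Finset.Ico (n+1) (j+1+1), x ^ k * (j.choose (k-1) : ℝ) * S k
        = x * ((1+x)^(j-n) / n) := by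
      have key := Finset.sum_Ico_add' (fun k => x ^ k * (j.choose (k-1) : ℝ) * S k) n (j+1) 1
      rw [← key, ← lemQ x hx n hn j hj, Finset.mul_sum]
      apply Finset.sum_congr rfl
      intro t ht
      simp only [Nat.add_sub_cancel]
      ring
    rw [h1, h2]
    have e6 : j + 1 - n = (j - n) + 1 := by omega
    rw [e6, pow_succ]
    ring


/-- For `ν > 0` and integers `1 ≤ n < j`,
`((1+2/ν)^j − 1)·(ν/(2+ν))^n / n
  − ∑_{k=n+1}^{j} (2/ν)^k C(j,k) ∑_{i=n}^{k−1} (−1)^{i+n} C(i,n) ν^i/(i·2^i)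
  = (1/n)·(1 − (ν/(2+ν))^n)`. -/
theorem binomial_double_sum_identity (ν : ℝ) (hν : 0 < ν) (n j : ℕ)
    (hn : 1 ≤ n) (hj : n < j) :
    ((1 + 2 / ν) ^ j - 1) * (ν / (2 + ν)) ^ n / (n : ℝ) -
        ∑ k ∈ Finset.Icc (n + 1) j, (2 / ν) ^ k * (j.choose k : ℝ) *
          ∑ i ∈ Finset.Ico n k,
            (-1 : ℝ) ^ (i + n) * (i.choose n : ℝ) * (ν ^ i / ((i : ℝ) * 2 ^ i))
      = (1 / (n : ℝ)) * (1 - (ν / (2 + ν)) ^ n) := by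
  have hν' : ν ≠ 0 := ne_of_gt hν
  have hx : (2/ν : ℝ) ≠ 0 := by positivity
  have hsum : ∑ k ∈ Finset.Icc (n + 1) j, (2/ν) ^ k * (j.choose k : ℝ) *
          ∑ i ∈ Finset.Ico n k,
            (-1 : ℝ) ^ (i + n) * (i.choose n : ℝ) * (ν ^ i / ((i : ℝ) * 2 ^ i))
      = ((1+2/ν)^(j-n) - 1) / n := by
    rw [← lemP (2/ν) hx n hn j (le_of_lt hj), ← Finset.Ico_add_one_right_eq_Icc]
    apply Finset.sum_congr rfl
    intro k hk
    congr 1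
    apply Finset.sum_congr rfl
    intro i hi
    rw [one_div_div, div_pow]
    ring
  rw [hsum]
  have hA : (ν/(2+ν)) * (1+2/ν) = 1 := by
    have h2ν : (2+ν : ℝ) ≠ 0 := by positivity
    field_simp
    ring
  have f1 : (ν/(2+ν))^n * (1+2/ν)^n = 1 := by
    rw [← mul_pow, hA, one_pow]
  have f2 : (1+2/ν)^(j-n) * (1+2/ν)^n = (1+2/ν)^j := by
    rw [← pow_add]
    congr 1
    omega
  rw [← f2]
  linear_combination ((1+2/ν)^(j-n)/(n:ℝ)) * f1
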